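/- Let α, β > 0 and let X be a random variable with the Beta(α, β) distribution. Then X − E[X] is σ²-sub-Gaussian with σ² = 1/(4(α + β + 1)); that is, for every λ ∈ ℝ, E[exp(λ (X − E[X]))] ≤ exp( λ² / (8(α + β + 1)) ). -/

import Mathlib

open MeasureTheory Real

/-- The Beta(α, β) probability measure on ℝ, with density proportional to
`x^(α−1) (1−x)^(β−1)` on `(0,1)`. -/
noncomputable def betaMeasure (α β : ℝ) : Measure ℝ :=
  (volume.restrict (Set.Ioo (0 : ℝ) 1)).withDensity fun x =>
    ENNReal.ofReal (x ^ (α - 1) * (1 - x) ^ (β - 1) /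
      ∫ y in Set.Ioo (0 : ℝ) 1, y ^ (α - 1) * (1 - y) ^ (β - 1))

namespace BetaSG

open Set
open scoped NNReal ENNReal

/-- Beta weight. -/
noncomputable def w (α β x : ℝ) : ℝ := x ^ (α - 1) * (1 - x) ^ (β - 1)

lemma w_meas (α β : ℝ) : Measurable (w α β) := by
  unfold w
  fun_prop

lemma w_pos {α β x : ℝ} (hx : x ∈ Ioo (0:ℝ) 1) : 0 < w α β x :=
  mul_pos (rpow_pos_of_pos hx.1 _) (rpow_pos_of_pos (by linarith [hx.2]) _)

lemma w_int {α β : ℝ} (hα : 0 < α) (hβ : 0 < β) : IntegrableOn (w α β) (Ioo (0:ℝ) 1) := by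
  have h := Complex.betaIntegral_convergent (u := (α:ℂ)) (v := (β:ℂ)) (by simpa) (by simpa)
  rw [intervalIntegrable_iff_integrableOn_Ioo_of_le zero_le_one] at h
  have : IntegrableOn (fun x : ℝ => ((w α β x : ℝ) : ℂ)) (Ioo (0:ℝ) 1) := by
    apply h.congr_fun ?_ measurableSet_Ioo
    intro x hx
    unfold w
    push_cast
    rw [Complex.ofReal_cpow hx.1.le, Complex.ofReal_cpow (by linarith [hx.2] : (0:ℝ) ≤ 1 - x)]
    push_cast
    ring
  have h2 := this.re
  exact (by simpa using h2 : Integrable (fun x => w α β x) (volume.restrict (Ioo (0:ℝ) 1)))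


variable {α β : ℝ}


variable {α β : ℝ}

/-- Unnormalized tilted moments. -/
noncomputable def Z (α β : ℝ) (k : ℕ) (l : ℝ) : ℝ :=
  ∫ x in Ioo (0:ℝ) 1, x ^ k * Real.exp (l * x) * w α β x

variable {α β : ℝ} (hα : 0 < α) (hβ : 0 < β)

lemma integrand_int (hα : 0 < α) (hβ : 0 < β) {φ : ℝ → ℝ} (hφ : Measurable φ) {C : ℝ}
    (hbd : ∀ x ∈ Ioo (0:ℝ) 1, |φ x| ≤ C) :
    IntegrableOn (fun x => φ x * w α β x) (Ioo (0:ℝ) 1) := by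
  apply ((w_int hα hβ).const_mul C).mono' ((hφ.mul (w_meas α β)).aestronglyMeasurable)
  filter_upwards [ae_restrict_mem measurableSet_Ioo] with x hx
  rw [Pi.mul_apply, norm_mul, Real.norm_eq_abs, Real.norm_eq_abs, abs_of_pos (w_pos hx)]
  exact mul_le_mul_of_nonneg_right (hbd x hx) (w_pos hx).le

lemma Zint (hα : 0 < α) (hβ : 0 < β) (k : ℕ) (l : ℝ) :
    IntegrableOn (fun x => x ^ k * Real.exp (l * x) * w α β x) (Ioo (0:ℝ) 1) := by
  have : Measurable fun x : ℝ => x ^ k * Real.exp (l * x) := by fun_prop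
  refine (integrand_int hα hβ this (C := Real.exp |l|)) ?_
  intro x hx
  rw [abs_mul, abs_of_pos (Real.exp_pos _), abs_pow, abs_of_pos hx.1]
  calc x ^ k * Real.exp (l * x) ≤ 1 * Real.exp |l| := by
        apply mul_le_mul (pow_le_one₀ hx.1.le hx.2.le) (Real.exp_le_exp.2 ?_)
          (Real.exp_pos _).le one_pos.le
        calc l * x ≤ |l * x| := le_abs_self _
          _ ≤ |l| := by rw [abs_mul]; nlinarith [abs_nonneg l, abs_le_one_iff_mul_self_le_one.2 (by nlinarith [hx.1, hx.2] : x*x ≤ 1)]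
    _ = Real.exp |l| := one_mul _

lemma Z_pos (hα : 0 < α) (hβ : 0 < β) (k : ℕ) (l : ℝ) : 0 < Z α β k l := by
  rw [Z]
  apply (setIntegral_pos_iff_support_of_nonneg_ae ?_ (Zint hα hβ k l)).2
  · have : (Ioo (0:ℝ) 1) ⊆ Function.support (fun x => x ^ k * Real.exp (l * x) * w α β x) := by
      intro x hx
      exact (mul_pos (mul_pos (pow_pos hx.1 k) (Real.exp_pos _)) (w_pos hx)).ne'
    refine lt_of_lt_of_le ?_ (measure_mono (subset_inter this subset_rfl))
    simp
  · filter_upwards [ae_restrict_mem measurableSet_Ioo] with x hx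
    exact (mul_pos (mul_pos (pow_pos hx.1 k) (Real.exp_pos _)) (w_pos hx)).le

lemma hasDerivAt_Z (hα : 0 < α) (hβ : 0 < β) (k : ℕ) (l : ℝ) :
    HasDerivAt (Z α β k) (Z α β (k+1) l) l := by
  have key := hasDerivAt_integral_of_dominated_loc_of_deriv_le
    (μ := volume.restrict (Ioo (0:ℝ) 1)) (x₀ := l) (s := Metric.ball l 1) (Metric.ball_mem_nhds l one_pos)
    (F := fun l x => x ^ k * Real.exp (l * x) * w α β x)
    (F' := fun l x => x ^ (k+1) * Real.exp (l * x) * w α β x)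
    (bound := fun x => Real.exp (|l| + 1) * w α β x)
    ?_ ?_ ?_ ?_ ?_ ?_
  · exact key.2
  · filter_upwards with l'
    exact (Zint hα hβ k l').aestronglyMeasurable
  · exact Zint hα hβ k l
  · exact (Zint hα hβ (k+1) l).aestronglyMeasurable
  · filter_upwards [ae_restrict_mem measurableSet_Ioo] with x hx l' hl'
    rw [Real.norm_eq_abs, abs_mul, abs_mul, abs_pow, abs_of_pos hx.1,
      abs_of_pos (Real.exp_pos _), abs_of_pos (w_pos hx)]
    have h1 : x ^ (k+1) ≤ 1 := pow_le_one₀ hx.1.le hx.2.le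
    have h2 : Real.exp (l' * x) ≤ Real.exp (|l| + 1) := by
      apply Real.exp_le_exp.2
      have : |l'| ≤ |l| + 1 := by
        have := mem_ball_iff_norm.1 hl'
        rw [Real.norm_eq_abs] at this
        calc |l'| = |l + (l' - l)| := by ring_nf
          _ ≤ |l| + |l' - l| := abs_add_le _ _
          _ ≤ |l| + 1 := by have h' := abs_sub_comm l' l; linarith
      calc l' * x ≤ |l' * x| := le_abs_self _
        _ = |l'| * |x| := abs_mul _ _
        _ ≤ (|l| + 1) * 1 := by
            apply mul_le_mul this ?_ (abs_nonneg _) (by positivity)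
            rw [abs_of_pos hx.1]; exact hx.2.le
        _ = |l| + 1 := mul_one _
    calc x ^ (k+1) * Real.exp (l' * x) * w α β x ≤ 1 * Real.exp (|l|+1) * w α β x := by
          apply mul_le_mul_of_nonneg_right ?_ (w_pos hx).le
          exact mul_le_mul h1 h2 (Real.exp_pos _).le one_pos.le
      _ = Real.exp (|l|+1) * w α β x := by ring
  · exact (w_int hα hβ).const_mul _
  · filter_upwards [ae_restrict_mem measurableSet_Ioo] with x hx l' hl'
    have : HasDerivAt (fun l' => x ^ k * Real.exp (l' * x) * w α β x)
        (x ^ k * (Real.exp (l' * x) * x) * w α β x) l' := by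
      have h := (Real.hasDerivAt_exp (l' * x)).comp l' (hasDerivAt_mul_const x (x := l'))
      exact (((h.const_mul (x ^ k))).mul_const (w α β x))
    exact this.congr_deriv (by ring)



lemma ibp (hα : 0 < α) (hβ : 0 < β) (l : ℝ) :
    l * Z α β 1 l - l * Z α β 2 l + α * Z α β 0 l - (α + β) * Z α β 1 l = 0 := by
  set F : ℝ → ℝ := fun x => Real.exp (l * x) * (x ^ α * (1 - x) ^ β) with hF
  set G : ℝ → ℝ := fun x =>
    Real.exp (l * x) * (l * (x - x ^ 2) + (α * (1 - x) - β * x)) * w α β x with hG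
  have hcont : ContinuousOn F (Icc (0:ℝ) 1) := by
    intro x hx
    apply ContinuousAt.continuousWithinAt
    apply ContinuousAt.mul (by fun_prop)
    apply ContinuousAt.mul
    · exact Real.continuousAt_rpow_const x α (Or.inr hα.le)
    · exact (Real.continuousAt_rpow_const (1 - x) β (Or.inr hβ.le)).comp
        (by fun_prop : ContinuousAt (fun y : ℝ => 1 - y) x)
  have hderiv : ∀ x ∈ Ioo (0:ℝ) 1, HasDerivAt F (G x) x := by
    intro x hx
    have h1 : HasDerivAt (fun y : ℝ => y ^ α) (α * x ^ (α - 1)) x := by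
      simpa using Real.hasDerivAt_rpow_const (x := x) (p := α) (Or.inl hx.1.ne')
    have h2 : HasDerivAt (fun y : ℝ => (1 - y) ^ β) (-(β * (1 - x) ^ (β - 1))) x := by
      have h3 : HasDerivAt (fun y : ℝ => (1:ℝ) - y) (-1) x := by
        simpa using (hasDerivAt_id x).const_sub 1
      have h4 := (Real.hasDerivAt_rpow_const (x := 1 - x) (p := β)
        (Or.inl (by linarith [hx.2] : (1:ℝ) - x ≠ 0))).comp x h3
      exact h4.congr_deriv (by ring)
    have h5 : HasDerivAt (fun y : ℝ => Real.exp (l * y)) (l * Real.exp (l * x)) x := by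
      have := (Real.hasDerivAt_exp (l * x)).comp x ((hasDerivAt_id x).const_mul l)
      exact (by simpa [mul_comm] using this : HasDerivAt (rexp ∘ HMul.hMul l) (l * rexp (l * x)) x)
    have h6 := (h5.mul (h1.mul h2))
    refine h6.congr_deriv ?_
    have e1 : x ^ α = x ^ (α - 1) * x := by
      have h := Real.rpow_add_one hx.1.ne' (α - 1)
      rw [sub_add_cancel] at h; exact h
    have e2 : (1 - x) ^ β = (1 - x) ^ (β - 1) * (1 - x) := by
      have h := Real.rpow_add_one (by linarith [hx.2] : (1:ℝ) - x ≠ 0) (β - 1)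
      rw [sub_add_cancel] at h; exact h
    rw [hG]
    simp only [w, e1, e2, Pi.mul_apply]
    ring
  have hGint : IntegrableOn G (Ioo (0:ℝ) 1) := by
    apply integrand_int hα hβ (by fun_prop) (C := Real.exp |l| * (|l| + α + β))
    intro x hx
    rw [abs_mul, abs_of_pos (Real.exp_pos _)]
    have hb1 : Real.exp (l * x) ≤ Real.exp |l| := by
      apply Real.exp_le_exp.2
      calc l * x ≤ |l| * |x| := by rw [← abs_mul]; exact le_abs_self _
        _ ≤ |l| * 1 := by
            apply mul_le_mul_of_nonneg_left ?_ (abs_nonneg l)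
            rw [abs_of_pos hx.1]; exact hx.2.le
        _ = |l| := mul_one _
    have hb2 : |l * (x - x ^ 2) + (α * (1 - x) - β * x)| ≤ |l| + α + β := by
      have h0x : (0:ℝ) ≤ x := hx.1.le
      have hx1 : x ≤ 1 := hx.2.le
      have : |l * (x - x^2)| ≤ |l| := by
        rw [abs_mul]
        calc |l| * |x - x^2| ≤ |l| * 1 := by
              apply mul_le_mul_of_nonneg_left ?_ (abs_nonneg l)
              rw [abs_of_nonneg (by nlinarith)]; nlinarith
          _ = |l| := mul_one _
      have h2' : |α * (1 - x) - β * x| ≤ α + β := by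
        rw [abs_sub_le_iff]; constructor <;> nlinarith
      calc |l * (x - x ^ 2) + (α * (1 - x) - β * x)|
          ≤ |l * (x - x^2)| + |α * (1 - x) - β * x| := abs_add_le _ _
        _ ≤ |l| + (α + β) := add_le_add this h2'
        _ = |l| + α + β := by ring
    exact mul_le_mul hb1 hb2 (abs_nonneg _) (Real.exp_pos _).le
  have key : ∫ x in (0:ℝ)..1, G x = F 1 - F 0 := by
    apply intervalIntegral.integral_eq_sub_of_hasDeriv_right_of_le zero_le_one hcont
      (fun x hx => (hderiv x hx).hasDerivWithinAt)
    rwa [intervalIntegrable_iff_integrableOn_Ioo_of_le zero_le_one]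
  have hF1 : F 1 = 0 := by simp [hF, Real.zero_rpow hβ.ne']
  have hF0 : F 0 = 0 := by simp [hF, Real.zero_rpow hα.ne']
  rw [hF1, hF0, sub_zero] at key
  rw [intervalIntegral.integral_of_le zero_le_one,
    MeasureTheory.integral_Ioc_eq_integral_Ioo] at key
  -- rewrite G as linear combination
  have hGeq : ∀ x : ℝ, G x =
      (l * (x ^ 1 * Real.exp (l*x) * w α β x) - l * (x ^ 2 * Real.exp (l*x) * w α β x))
      + (α * (x ^ 0 * Real.exp (l*x) * w α β x) - (α+β) * (x ^ 1 * Real.exp (l*x) * w α β x)) := by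
    intro x; rw [hG]; ring
  have hsplit : ∫ x in Ioo (0:ℝ) 1, G x =
      l * Z α β 1 l - l * Z α β 2 l + (α * Z α β 0 l - (α+β) * Z α β 1 l) := by
    rw [integral_congr_ae (Filter.Eventually.of_forall hGeq)]
    have i1 : IntegrableOn (fun x => l * (x ^ 1 * Real.exp (l*x) * w α β x)
        - l * (x ^ 2 * Real.exp (l*x) * w α β x)) (Ioo (0:ℝ) 1) :=
      ((Zint hα hβ 1 l).const_mul l).sub ((Zint hα hβ 2 l).const_mul l)
    have i2 : IntegrableOn (fun x => α * (x ^ 0 * Real.exp (l*x) * w α β x)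
        - (α+β) * (x ^ 1 * Real.exp (l*x) * w α β x)) (Ioo (0:ℝ) 1) :=
      ((Zint hα hβ 0 l).const_mul α).sub ((Zint hα hβ 1 l).const_mul (α+β))
    rw [integral_add i1 i2,
      integral_sub ((Zint hα hβ 1 l).const_mul l) ((Zint hα hβ 2 l).const_mul l),
      integral_sub ((Zint hα hβ 0 l).const_mul α) ((Zint hα hβ 1 l).const_mul (α+β)),
      MeasureTheory.integral_const_mul, MeasureTheory.integral_const_mul,
      MeasureTheory.integral_const_mul, MeasureTheory.integral_const_mul]
    rfl
  rw [hsplit] at key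
  linarith [key]

section comparison
variable (hα : 0 < α) (hβ : 0 < β)

/-- the tilted mean -/
noncomputable def g (α β : ℝ) (t : ℝ) : ℝ := Z α β 1 t / Z α β 0 t

lemma hasDerivAt_g (hα : 0 < α) (hβ : 0 < β) (t : ℝ) :
    HasDerivAt (g α β) ((Z α β 2 t * Z α β 0 t - Z α β 1 t * Z α β 1 t) / Z α β 0 t ^ 2) t :=
  (hasDerivAt_Z hα hβ 1 t).div (hasDerivAt_Z hα hβ 0 t) (Z_pos hα hβ 0 t).ne'

lemma g_zero (hα : 0 < α) (hβ : 0 < β) : g α β 0 = α / (α + β) := by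
  have h := ibp hα hβ 0
  have h0 := Z_pos hα hβ 0 0
  rw [g]
  field_simp
  linarith

/-- The mean ODE inequality at a crossing point. -/
lemma crossing (hα : 0 < α) (hβ : 0 < β) {t : ℝ} (ht : 0 < t)
    (hD : 0 < g α β t - (α / (α + β) + t / (4 * (α + β + 1)))) :
    (Z α β 2 t * Z α β 0 t - Z α β 1 t * Z α β 1 t) / Z α β 0 t ^ 2
      - 1 / (4 * (α + β + 1)) - (g α β t - (α / (α + β) + t / (4 * (α + β + 1)))) ≤ 0 := by
  set z0 := Z α β 0 t with hz0def
  set z1 := Z α β 1 t with hz1def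
  set z2 := Z α β 2 t with hz2def
  have hz0 : 0 < z0 := Z_pos hα hβ 0 t
  have hibp : t * z1 - t * z2 + α * z0 - (α + β) * z1 = 0 := ibp hα hβ t
  set c := α + β with hc
  have hcpos : 0 < c := by positivity
  set p := z1 / z0 with hp
  have hz0' : z0 ≠ 0 := hz0.ne'
  have ht' : t ≠ 0 := ht.ne'
  have hz2' : z2 = z1 + (α * z0 - c * z1) / t := by
    field_simp
    linarith
  have hgp : (z2 * z0 - z1 * z1) / z0 ^ 2 = p + (α - c * p) / t - p ^ 2 := by
    rw [hp, hz2']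
    field_simp
  have hg : g α β t = p := rfl
  rw [hgp, hg]
  set σ2 := 1 / (4 * (c + 1)) with hσ2
  have hσ2pos : 0 < σ2 := by rw [hσ2]; positivity
  have hσ : σ2 * (4 * (c + 1)) = 1 := by rw [hσ2]; field_simp
  have hDpos : 0 < p - (α / c + t * σ2) := by
    have h' : t / (4 * (c + 1)) = t * σ2 := by rw [hσ2]; ring
    rw [← h']
    exact hD
  have hmc : α / c * c = α := by field_simp
  have hfrac : (α - c * p) / t ≤ - (c * σ2) := by
    rw [div_le_iff₀ ht]
    have hcD : 0 < c * (p - (α / c + t * σ2)) := mul_pos hcpos hDpos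
    nlinarith [hcD, hmc]
  have hquarter : p - p ^ 2 ≤ 1 / 4 := by nlinarith [sq_nonneg (p - 1/2)]
  have ht2 : t / (4 * (c + 1)) = t * σ2 := by rw [hσ2]; ring
  rw [ht2]
  nlinarith [hfrac, hquarter, hσ, hDpos]

noncomputable def Efun (α β : ℝ) (t : ℝ) : ℝ :=
  (g α β t - (α / (α + β) + t / (4 * (α + β + 1)))) * Real.exp (-t)

lemma hasDerivAt_Efun (hα : 0 < α) (hβ : 0 < β) (t : ℝ) :
    HasDerivAt (Efun α β)
      (((Z α β 2 t * Z α β 0 t - Z α β 1 t * Z α β 1 t) / Z α β 0 t ^ 2 - 1 / (4 * (α + β + 1)))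
          * Real.exp (-t)
        + (g α β t - (α / (α + β) + t / (4 * (α + β + 1)))) * (-Real.exp (-t))) t := by
  have h1 : HasDerivAt (fun t : ℝ => g α β t - (α / (α + β) + t / (4 * (α + β + 1))))
      ((Z α β 2 t * Z α β 0 t - Z α β 1 t * Z α β 1 t) / Z α β 0 t ^ 2
        - 1 / (4 * (α + β + 1))) t := by
    apply (hasDerivAt_g hα hβ t).sub
    have : HasDerivAt (fun t : ℝ => α / (α + β) + t / (4 * (α + β + 1)))
        (0 + 1 / (4 * (α + β + 1))) t := by
      apply (hasDerivAt_const t _).add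
      simpa using (hasDerivAt_id t).div_const (4 * (α + β + 1))
    simpa using this
  have h2 : HasDerivAt (fun t : ℝ => Real.exp (-t)) (-Real.exp (-t)) t := by
    have := (Real.hasDerivAt_exp (-t)).comp t ((hasDerivAt_id t).neg)
    exact (by simpa using this : HasDerivAt (rexp ∘ Neg.neg) (-rexp (-t)) t)
  exact h1.mul h2

lemma cont_Efun (hα : 0 < α) (hβ : 0 < β) : Continuous (Efun α β) :=
  continuous_iff_continuousAt.2 fun t => (hasDerivAt_Efun hα hβ t).continuousAt

lemma Efun_nonpos (hα : 0 < α) (hβ : 0 < β) {L : ℝ} (hL : 0 ≤ L) : Efun α β L ≤ 0 := by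
  by_contra hcon
  push_neg at hcon
  set S : Set ℝ := Icc 0 L ∩ Efun α β ⁻¹' Iic 0 with hS
  have hE0 : Efun α β 0 = 0 := by
    rw [Efun, g_zero hα hβ]
    simp
  have h0S : (0:ℝ) ∈ S := ⟨⟨le_refl _, hL⟩, by simp [hE0]⟩
  have hclosed : IsClosed S :=
    isClosed_Icc.inter (IsClosed.preimage (cont_Efun hα hβ) isClosed_Iic)
  have hbdd : BddAbove S := BddAbove.mono (inter_subset_left) bddAbove_Icc
  set t0 := sSup S with ht0
  have ht0S : t0 ∈ S := hclosed.csSup_mem ⟨0, h0S⟩ hbdd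
  have ht0L : t0 < L := by
    rcases lt_or_eq_of_le ht0S.1.2 with h | h
    · exact h
    · exact absurd (h ▸ ht0S.2) (by simpa using hcon)
  have ht00 : 0 ≤ t0 := ht0S.1.1
  have hmid : ∀ u ∈ Ioc t0 L, 0 < Efun α β u := by
    intro u hu
    by_contra hu2
    push_neg at hu2
    have : u ∈ S := ⟨⟨ht00.trans hu.1.le, hu.2⟩, hu2⟩
    exact absurd (le_csSup hbdd this) (not_le.2 hu.1)
  have hanti : AntitoneOn (Efun α β) (Icc t0 L) := by
    apply antitoneOn_of_deriv_nonpos (convex_Icc _ _) (cont_Efun hα hβ).continuousOn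
    · intro x hx
      exact (hasDerivAt_Efun hα hβ x).differentiableAt.differentiableWithinAt
    · intro x hx
      rw [interior_Icc] at hx
      rw [(hasDerivAt_Efun hα hβ x).deriv]
      have hxpos : 0 < x := lt_of_le_of_lt ht00 hx.1
      have hEx : 0 < Efun α β x := hmid x ⟨hx.1, hx.2.le⟩
      have hDx : 0 < g α β x - (α / (α + β) + x / (4 * (α + β + 1))) := by
        by_contra hD2
        push_neg at hD2
        have : Efun α β x ≤ 0 :=
          mul_nonpos_of_nonpos_of_nonneg hD2 (Real.exp_pos _).le
        linarith
      have hcr := crossing hα hβ hxpos hDx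
      have hexp : 0 < Real.exp (-x) := Real.exp_pos _
      set A := (Z α β 2 x * Z α β 0 x - Z α β 1 x * Z α β 1 x) / Z α β 0 x ^ 2
        - 1 / (4 * (α + β + 1)) with hA
      set B := g α β x - (α / (α + β) + x / (4 * (α + β + 1))) with hB
      calc A * Real.exp (-x) + B * (-Real.exp (-x)) = (A - B) * Real.exp (-x) := by ring
        _ ≤ 0 := mul_nonpos_of_nonpos_of_nonneg hcr hexp.le
  have hint : Efun α β L ≤ Efun α β t0 :=
    hanti ⟨le_refl _, ht0L.le⟩ ⟨ht0L.le, le_refl _⟩ ht0L.le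
  have := ht0S.2
  simp only [mem_preimage, mem_Iic] at this
  linarith

lemma g_le (hα : 0 < α) (hβ : 0 < β) {t : ℝ} (ht : 0 ≤ t) :
    g α β t ≤ α / (α + β) + t / (4 * (α + β + 1)) := by
  have h := Efun_nonpos hα hβ ht
  rw [Efun] at h
  have hexp : 0 < Real.exp (-t) := Real.exp_pos _
  nlinarith [h, hexp]

/-- The main one-sided MGF bound. -/
lemma key (hα : 0 < α) (hβ : 0 < β) {l : ℝ} (hl : 0 ≤ l) :
    Z α β 0 l / Z α β 0 0 ≤
      Real.exp (l * (α / (α + β)) + l ^ 2 / (8 * (α + β + 1))) := by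
  set Q : ℝ → ℝ := fun t =>
    l * (α / (α + β)) + -- dummy to be replaced
    0 with hQtrash
  clear hQtrash Q
  set Qf : ℝ → ℝ := fun t =>
    (α / (α + β)) * t + t ^ 2 / (8 * (α + β + 1)) - Real.log (Z α β 0 t) with hQf
  have hQder : ∀ t : ℝ, HasDerivAt Qf
      ((α / (α + β)) + t / (4 * (α + β + 1)) - g α β t) t := by
    intro t
    rw [hQf]
    apply HasDerivAt.sub
    · have h1 : HasDerivAt (fun t : ℝ => (α / (α + β)) * t) (α / (α + β)) t := by
        simpa using (hasDerivAt_id t).const_mul (α / (α + β))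
      have h2 : HasDerivAt (fun t : ℝ => t ^ 2 / (8 * (α + β + 1)))
          (2 * t / (8 * (α + β + 1))) t := by
        have := (hasDerivAt_pow 2 t).div_const (8 * (α + β + 1))
        simpa using this
      have := h1.add h2
      refine this.congr_deriv ?_
      field_simp
      ring
    · have := (hasDerivAt_Z hα hβ 0 t).log (Z_pos hα hβ 0 t).ne'
      exact this
  have hmono : MonotoneOn Qf (Ici (0:ℝ)) := by
    apply monotoneOn_of_deriv_nonneg (convex_Ici _)
    · exact Continuous.continuousOn (continuous_iff_continuousAt.2
        fun t => (hQder t).continuousAt)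
    · intro x hx
      exact (hQder x).differentiableAt.differentiableWithinAt
    · intro x hx
      rw [interior_Ici] at hx
      rw [(hQder x).deriv]
      have := g_le hα hβ (le_of_lt hx)
      linarith
  have hQ := hmono (self_mem_Ici) (mem_Ici.2 hl) hl
  rw [hQf] at hQ
  simp only at hQ
  have hlog : Real.log (Z α β 0 l) - Real.log (Z α β 0 0) ≤
      (α / (α + β)) * l + l ^ 2 / (8 * (α + β + 1)) := by
    norm_num at hQ
    linarith
  have h0 : 0 < Z α β 0 0 := Z_pos hα hβ 0 0
  have h1 : 0 < Z α β 0 l := Z_pos hα hβ 0 l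
  rw [div_le_iff₀ h0]
  calc Z α β 0 l = Real.exp (Real.log (Z α β 0 l)) := (Real.exp_log h1).symm
    _ ≤ Real.exp ((α / (α + β)) * l + l ^ 2 / (8 * (α + β + 1)) + Real.log (Z α β 0 0)) := by
        apply Real.exp_le_exp.2
        linarith
    _ = Real.exp (l * (α / (α + β)) + l ^ 2 / (8 * (α + β + 1))) * Z α β 0 0 := by
        rw [Real.exp_add, Real.exp_log h0, mul_comm (α / (α + β)) l]

end comparison


lemma Z_reflect (α β l : ℝ) : Z α β 0 l = Real.exp l * Z β α 0 (-l) := by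
  have h1 : Z α β 0 l = ∫ x in (0:ℝ)..1, Real.exp (l * x) * w α β x := by
    rw [Z, intervalIntegral.integral_of_le zero_le_one, integral_Ioc_eq_integral_Ioo]
    norm_num
  have h2 : Z β α 0 (-l) = ∫ x in (0:ℝ)..1, Real.exp (-l * x) * w β α x := by
    rw [Z, intervalIntegral.integral_of_le zero_le_one, integral_Ioc_eq_integral_Ioo]
    norm_num
  have h3 := intervalIntegral.integral_comp_sub_left
    (a := (0:ℝ)) (b := 1) (fun x => Real.exp (l * x) * w α β x) 1
  norm_num at h3
  rw [h1, ← h3]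
  have h4 : ∀ x : ℝ, Real.exp (l * (1 - x)) * w α β (1 - x)
      = Real.exp l * (Real.exp (-l * x) * w β α x) := by
    intro x
    simp only [w]
    have h5 : (1 : ℝ) - (1 - x) = x := by ring
    rw [h5, show rexp l * (rexp (-l*x) * (x ^ (β-1) * (1-x) ^ (α-1)))
        = rexp l * rexp (-l*x) * (x ^ (β-1) * (1-x) ^ (α-1)) from by ring,
      ← Real.exp_add, show l + -l*x = l * (1-x) from by ring]
    ring
  rw [h2]
  rw [intervalIntegral.integral_congr (fun x _ => h4 x)]
  rw [intervalIntegral.integral_const_mul]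

variable {α β : ℝ}

lemma betaMeasure_eq (hα : 0 < α) (hβ : 0 < β) :
    betaMeasure α β = (volume.restrict (Ioo (0:ℝ) 1)).withDensity
      fun x => ((Real.toNNReal (w α β x / Z α β 0 0) : ℝ≥0) : ℝ≥0∞) := by
  have hnorm : (∫ y in Ioo (0:ℝ) 1, y ^ (α-1) * (1-y) ^ (β-1)) = Z α β 0 0 := by
    rw [Z]
    apply setIntegral_congr_fun measurableSet_Ioo
    intro x _
    simp [w]
  rw [betaMeasure, hnorm]
  rfl

lemma integral_beta (hα : 0 < α) (hβ : 0 < β) (f : ℝ → ℝ) :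
    ∫ x, f x ∂(betaMeasure α β) = ∫ x in Ioo (0:ℝ) 1, (w α β x / Z α β 0 0) * f x := by
  rw [betaMeasure_eq hα hβ]
  have hm : Measurable fun x => Real.toNNReal (w α β x / Z α β 0 0) := by
    apply Measurable.real_toNNReal
    exact (w_meas α β).div_const _
  rw [integral_withDensity_eq_integral_smul hm f]
  apply setIntegral_congr_fun measurableSet_Ioo
  intro x hx
  have hnn : 0 ≤ w α β x / Z α β 0 0 :=
    div_nonneg (w_pos hx).le (Z_pos hα hβ 0 0).le
  simp only [NNReal.smul_def, Real.coe_toNNReal _ hnn, smul_eq_mul]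

lemma mean_eq (hα : 0 < α) (hβ : 0 < β) :
    (∫ y, y ∂(betaMeasure α β)) = α / (α + β) := by
  have h1 : (∫ y, y ∂(betaMeasure α β)) = ∫ x in Ioo (0:ℝ) 1,
      (x ^ 1 * Real.exp (0 * x) * w α β x) / Z α β 0 0 := by
    rw [integral_beta hα hβ (fun y => y)]
    apply setIntegral_congr_fun measurableSet_Ioo
    intro x _
    simp only
    rw [pow_one, zero_mul, Real.exp_zero]
    ring
  rw [h1, integral_div]
  have h2 : (∫ x in Ioo (0:ℝ) 1, x ^ 1 * Real.exp (0 * x) * w α β x) = Z α β 1 0 := rfl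
  rw [h2]
  have h3 := ibp hα hβ 0
  have h0 := Z_pos hα hβ 0 0
  have hc : (0:ℝ) < α + β := by positivity
  rw [div_eq_div_iff h0.ne' hc.ne']
  linarith

theorem beta_subGaussian' (hα : 0 < α) (hβ : 0 < β) (l : ℝ) :
    ∫ x, Real.exp (l * (x - ∫ y, y ∂(betaMeasure α β))) ∂(betaMeasure α β) ≤
      Real.exp (l ^ 2 / (8 * (α + β + 1))) := by
  set m := α / (α + β) with hm
  rw [mean_eq hα hβ]
  have h1 : ∫ x, Real.exp (l * (x - m)) ∂(betaMeasure α β)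
      = Real.exp (-(l * m)) * (Z α β 0 l / Z α β 0 0) := by
    rw [integral_beta hα hβ]
    have h2 : ∀ x : ℝ, (w α β x / Z α β 0 0) * Real.exp (l * (x - m))
        = Real.exp (-(l * m)) * ((x ^ 0 * Real.exp (l * x) * w α β x) / Z α β 0 0) := by
      intro x
      rw [pow_zero, one_mul, show l * (x - m) = l * x + -(l * m) from by ring, Real.exp_add]
      ring
    rw [setIntegral_congr_fun measurableSet_Ioo (fun x _ => h2 x), MeasureTheory.integral_const_mul,
      integral_div]
    rfl
  rw [h1]
  have hc : (0:ℝ) < α + β := by positivity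
  rcases le_or_gt 0 l with hl | hl
  · have hk := key hα hβ hl
    calc Real.exp (-(l * m)) * (Z α β 0 l / Z α β 0 0)
        ≤ Real.exp (-(l * m)) * Real.exp (l * m + l ^ 2 / (8 * (α + β + 1))) := by
          apply mul_le_mul_of_nonneg_left ?_ (Real.exp_pos _).le
          exact hk
      _ = Real.exp (l ^ 2 / (8 * (α + β + 1))) := by
          rw [← Real.exp_add]
          congr 1
          ring
  · have hk := key hβ hα (l := -l) (by linarith)
    have hr : Z α β 0 l = Real.exp l * Z β α 0 (-l) := Z_reflect α β l
    have hr0 : Z α β 0 0 = Z β α 0 0 := by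
      have := Z_reflect α β 0
      simpa using this
    rw [hr, hr0]
    have hZ0 : (0:ℝ) < Z β α 0 0 := Z_pos hβ hα 0 0
    calc Real.exp (-(l * m)) * (Real.exp l * Z β α 0 (-l) / Z β α 0 0)
        = Real.exp (-(l * m) + l) * (Z β α 0 (-l) / Z β α 0 0) := by
          rw [Real.exp_add]; ring
      _ ≤ Real.exp (-(l * m) + l) * Real.exp ((-l) * (β / (β + α)) + (-l) ^ 2 / (8 * (β + α + 1))) := by
          apply mul_le_mul_of_nonneg_left hk (Real.exp_pos _).le
      _ = Real.exp (l ^ 2 / (8 * (α + β + 1))) := by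
          rw [← Real.exp_add]
          congr 1
          rw [hm]
          have hca : β + α + 1 = α + β + 1 := by ring
          rw [hca]
          field_simp
          ring

end BetaSG

/-- Let `α, β > 0` and `X ~ Beta(α, β)`. Then `X − E[X]` is `σ²`-sub-Gaussian with
`σ² = 1/(4(α+β+1))`: for every `λ ∈ ℝ`,
`E[exp(λ(X − E[X]))] ≤ exp(λ²/(8(α+β+1)))`. -/
theorem beta_subGaussian {α β : ℝ} (hα : 0 < α) (hβ : 0 < β) (l : ℝ) :
    ∫ x, Real.exp (l * (x - ∫ y, y ∂(betaMeasure α β))) ∂(betaMeasure α β) ≤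
      Real.exp (l ^ 2 / (8 * (α + β + 1))) :=
  BetaSG.beta_subGaussian' hα hβ l
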